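/- Let $\mathfrak{C}_n$ be the set of $n$-cycles in the symmetric group $S_n$, and define the relation $\pi \leftrightsquigarrow \sigma$ to hold when $\sigma$ is obtained from $\pi$ by cutting the cycle of $\pi$ starting at $1$ into three nonempty arcs (the first containing $1$) and swapping the last two arcs. Define the $\mathfrak{C}_n \times \mathfrak{C}_n$ matrix $\Gamma$ by $\Gamma[\pi,\sigma] = 1$ if $\pi \leftrightsquigarrow \sigma$ and $0$ otherwise. Then $\Gamma$ is symmetric. -/
import Mathlib


open Matrix

/-- `π` is an `n`-cycle: a cycle whose support is all of `Fin n`. -/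
def IsNCycle {n : ℕ} (π : Equiv.Perm (Fin n)) : Prop :=
  π.IsCycle ∧ π.support = Finset.univ

/-- The suffix-shift relation with explicit cut points `k < ℓ`.  Writing the cycle of `π`
as `p 1 = 0, p 2, …, p n` with `p i = π^(i-1) 0`, the permutation `σ` maps
`p i ↦ p (i+1)` for `i ∉ {k, ℓ, n}`, while `p k ↦ p (ℓ+1)`, `p ℓ ↦ p 1` and
`p n ↦ p (k+1)`; i.e. the suffix `p (k+1), …, p n` of the cycle is cyclically shifted. -/
def shiftRelAt {n : ℕ} [NeZero n] (π σ : Equiv.Perm (Fin n)) (k ℓ : ℕ) : Prop :=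
  1 ≤ k ∧ k < ℓ ∧ ℓ < n ∧
  (∀ i, 1 ≤ i → i < n → i ≠ k → i ≠ ℓ →
      σ ((π ^ (i - 1)) (0 : Fin n)) = (π ^ i) (0 : Fin n)) ∧
  σ ((π ^ (k - 1)) (0 : Fin n)) = (π ^ ℓ) (0 : Fin n) ∧
  σ ((π ^ (ℓ - 1)) (0 : Fin n)) = (0 : Fin n) ∧
  σ ((π ^ (n - 1)) (0 : Fin n)) = (π ^ k) (0 : Fin n)

/-- The suffix-shift relation `π ⟷ σ` on `n`-cycles. -/
def shiftRel {n : ℕ} [NeZero n] (π σ : Equiv.Perm (Fin n)) : Prop :=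
  ∃ k ℓ : ℕ, shiftRelAt π σ k ℓ

attribute [local instance] Classical.propDecidable

/-- The adversary matrix `Γ` on `n`-cycles: `Γ[π, σ] = 1` if `π ⟷ σ` and `0` otherwise. -/
noncomputable def gammaMat (n : ℕ) [NeZero n] :
    Matrix {π : Equiv.Perm (Fin n) // IsNCycle π} {π : Equiv.Perm (Fin n) // IsNCycle π} ℝ :=
  Matrix.of fun π σ => if shiftRel π.1 σ.1 then 1 else 0

lemma IsNCycle.pow_n {n : ℕ} {π : Equiv.Perm (Fin n)} (h : IsNCycle π) : π ^ n = 1 := by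
  have ho := h.1.orderOf
  rw [h.2, Finset.card_univ, Fintype.card_fin] at ho
  have := pow_orderOf_eq_one π
  rwa [ho] at this

lemma shiftRelAt.symm_aux {n : ℕ} [NeZero n] {π σ : Equiv.Perm (Fin n)} (hπ : π ^ n = 1)
    {k ℓ : ℕ} (h : shiftRelAt π σ k ℓ) : shiftRelAt σ π k (k + n - ℓ) := by
  obtain ⟨hk, hkl, hln, hgen, hK, hL, hN⟩ := h
  set g : ℕ → ℕ := fun j => if j < k then j else if j < k + n - ℓ then j + ℓ - k else j + ℓ - n
    with hg
  have claim : ∀ j, j ≤ n - 1 → (σ ^ j) (0 : Fin n) = (π ^ g j) (0 : Fin n) := by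
    intro j
    induction j with
    | zero =>
      intro _
      have e : g 0 = 0 := by simp only [hg]; split_ifs <;> omega
      rw [e]
      simp
    | succ j ih =>
      intro hj
      have ih' := ih (by omega)
      rw [pow_succ', Equiv.Perm.mul_apply, ih']
      rcases lt_trichotomy (j + 1) k with h1 | h1 | h1
      · have e1 : g j = j := by simp only [hg]; split_ifs <;> omega
        have e2 : g (j + 1) = j + 1 := by simp only [hg]; split_ifs <;> omega
        rw [e1, e2]
        have := hgen (j + 1) (by omega) (by omega) (by omega) (by omega)
        simpa using this
      · have e1 : g j = k - 1 := by simp only [hg]; split_ifs <;> omega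
        have e2 : g (j + 1) = ℓ := by simp only [hg]; split_ifs <;> omega
        rw [e1, e2]; exact hK
      · rcases lt_trichotomy (j + 1) (k + n - ℓ) with h2 | h2 | h2
        · have e1 : g j = j + ℓ - k := by simp only [hg]; split_ifs <;> omega
          have e2 : g (j + 1) = (j + ℓ - k) + 1 := by simp only [hg]; split_ifs <;> omega
          rw [e1, e2]
          have := hgen (j + ℓ - k + 1) (by omega) (by omega) (by omega) (by omega)
          simpa using this
        · have e1 : g j = n - 1 := by simp only [hg]; split_ifs <;> omega
          have e2 : g (j + 1) = k := by simp only [hg]; split_ifs <;> omega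
          rw [e1, e2]; exact hN
        · have e1 : g j = j + ℓ - n := by simp only [hg]; split_ifs <;> omega
          have e2 : g (j + 1) = (j + ℓ - n) + 1 := by simp only [hg]; split_ifs <;> omega
          rw [e1, e2]
          have := hgen (j + ℓ - n + 1) (by omega) (by omega) (by omega) (by omega)
          simpa using this
  refine ⟨hk, by omega, by omega, ?_, ?_, ?_, ?_⟩
  · intro i h1 h2 h3 h4
    rw [claim (i - 1) (by omega), claim i (by omega)]
    have e : g i = g (i - 1) + 1 := by simp only [hg]; split_ifs <;> omega
    rw [e, pow_succ', Equiv.Perm.mul_apply]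
  · rw [claim (k - 1) (by omega), claim (k + n - ℓ) (by omega)]
    have e : g (k + n - ℓ) = g (k - 1) + 1 := by simp only [hg]; split_ifs <;> omega
    rw [e, pow_succ', Equiv.Perm.mul_apply]
  · rw [claim (k + n - ℓ - 1) (by omega)]
    have e : g (k + n - ℓ - 1) = n - 1 := by simp only [hg]; split_ifs <;> omega
    rw [e]
    calc π ((π ^ (n - 1)) (0 : Fin n)) = (π ^ (n - 1 + 1)) (0 : Fin n) := by
          rw [pow_succ', Equiv.Perm.mul_apply]
      _ = (0 : Fin n) := by
          rw [show n - 1 + 1 = n by have := Nat.pos_of_ne_zero (NeZero.ne n); omega, hπ]; rfl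
  · rw [claim (n - 1) (by omega), claim k (by omega)]
    have e1 : g (n - 1) = ℓ - 1 := by simp only [hg]; split_ifs <;> omega
    have e2 : g k = (ℓ - 1) + 1 := by simp only [hg]; split_ifs <;> omega
    rw [e1, e2, pow_succ', Equiv.Perm.mul_apply]

lemma shiftRel.symm' {n : ℕ} [NeZero n] {π σ : Equiv.Perm (Fin n)} (hπ : π ^ n = 1)
    (h : shiftRel π σ) : shiftRel σ π := by
  obtain ⟨k, ℓ, h⟩ := h
  exact ⟨k, k + n - ℓ, h.symm_aux hπ⟩

/-- The adversary matrix `Γ` of the suffix-shift relation on `n`-cycles is symmetric. -/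
theorem gammaMat_symm (n : ℕ) [NeZero n] : (gammaMat n)ᵀ = gammaMat n := by
  ext π σ
  have hiff : shiftRel σ.1 π.1 ↔ shiftRel π.1 σ.1 :=
    ⟨fun h => h.symm' σ.2.pow_n, fun h => h.symm' π.2.pow_n⟩
  simp only [transpose_apply, gammaMat, Matrix.of_apply, hiff]
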